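/- Let U be a metric space, U' ⊆ U a precompact open subset, Z ⊆ U' relatively closed in U', and for i = 1, …, N let Z_i ⊆ Z be relatively open subsets and W_K ⊆ U' open subsets indexed by K ⊆ {1,…,N} such that W_K ∩ Z = Z_K := ⋂_{i ∈ K} Z_i. Then there exist open subsets U_K ⊆ W_K with U_K ∩ Z = Z_K and U_J ∩ U_K = U_{J ∪ K} for all J, K ⊆ {1,…,N}. -/

import Mathlib

open Set Metric

/-- Separation of two mutually non-adherent sets by disjoint open sets in a metric space. -/
lemma my_sep {U : Type*} [MetricSpace U] {A B : Set U}
    (hAB : ∀ a ∈ A, a ∉ closure B) (hBA : ∀ b ∈ B, b ∉ closure A) :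
    ∃ EA EB : Set U, IsOpen EA ∧ IsOpen EB ∧ A ⊆ EA ∧ B ⊆ EB ∧ EA ∩ EB = ∅ := by
  rcases A.eq_empty_or_nonempty with hA | hA
  · exact ⟨∅, univ, isOpen_empty, isOpen_univ, by simp [hA], by simp, by simp⟩
  rcases B.eq_empty_or_nonempty with hB | hB
  · exact ⟨univ, ∅, isOpen_univ, isOpen_empty, by simp, by simp [hB], by simp⟩
  refine ⟨{x | infDist x A < infDist x B}, {x | infDist x B < infDist x A},
    isOpen_lt (continuous_infDist_pt A) (continuous_infDist_pt B),
    isOpen_lt (continuous_infDist_pt B) (continuous_infDist_pt A), ?_, ?_, ?_⟩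
  · intro a ha
    have h1 : infDist a A = 0 := infDist_zero_of_mem ha
    have h2 : infDist a B ≠ 0 := fun h => hAB a ha ((mem_closure_iff_infDist_zero hB).2 h)
    have h3 : 0 < infDist a B := lt_of_le_of_ne infDist_nonneg (Ne.symm h2)
    simpa [h1] using h3
  · intro b hb
    have h1 : infDist b B = 0 := infDist_zero_of_mem hb
    have h2 : infDist b A ≠ 0 := fun h => hBA b hb ((mem_closure_iff_infDist_zero hA).2 h)
    have h3 : 0 < infDist b A := lt_of_le_of_ne infDist_nonneg (Ne.symm h2)
    simpa [h1] using h3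
  · ext x
    simp only [mem_inter_iff, mem_setOf_eq, mem_empty_iff_false, iff_false, not_and]
    intro h1 h2
    linarith

/-- Two-set shrinking lemma: open sets `X`, `Y` with traces `ZA`, `ZB` on `Z` (relatively
open in `Z`) can be shrunk keeping the traces so that their intersection lands in a given
open set `P` containing `ZA ∩ ZB`. -/
lemma my_two_set {U : Type*} [MetricSpace U] {Z ZA ZB X Y P : Set U}
    (hZA : ∃ O, IsOpen O ∧ ZA = O ∩ Z) (hZB : ∃ O, IsOpen O ∧ ZB = O ∩ Z)
    (hXo : IsOpen X) (hYo : IsOpen Y) (hPo : IsOpen P)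
    (hXZ : X ∩ Z = ZA) (hYZ : Y ∩ Z = ZB) (hP : ZA ∩ ZB ⊆ P) :
    ∃ X' Y' : Set U, IsOpen X' ∧ IsOpen Y' ∧ X' ⊆ X ∧ Y' ⊆ Y ∧
      X' ∩ Z = ZA ∧ Y' ∩ Z = ZB ∧ X' ∩ Y' ⊆ P := by
  obtain ⟨OA, hOAo, hOA⟩ := hZA
  obtain ⟨OB, hOBo, hOB⟩ := hZB
  have hZBZ : ZB ⊆ Z := by rw [hOB]; exact inter_subset_right
  have hZAZ : ZA ⊆ Z := by rw [hOA]; exact inter_subset_right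
  have hsep1 : ∀ a ∈ ZA \ P, a ∉ closure (ZB \ P) := by
    rintro a ⟨haA, haP⟩ hcl
    have haO : a ∈ OA := by rw [hOA] at haA; exact haA.1
    obtain ⟨b, hbO, hbB, hbP⟩ := mem_closure_iff.1 hcl OA hOAo haO
    exact hbP (hP ⟨by rw [hOA]; exact ⟨hbO, hZBZ hbB⟩, hbB⟩)
  have hsep2 : ∀ b ∈ ZB \ P, b ∉ closure (ZA \ P) := by
    rintro b ⟨hbB, hbP⟩ hcl
    have hbO : b ∈ OB := by rw [hOB] at hbB; exact hbB.1
    obtain ⟨a, haO, haA, haP⟩ := mem_closure_iff.1 hcl OB hOBo hbO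
    exact haP (hP ⟨haA, by rw [hOB]; exact ⟨haO, hZAZ haA⟩⟩)
  obtain ⟨EA, EB, hEAo, hEBo, hAE, hBE, hEE⟩ := my_sep hsep1 hsep2
  refine ⟨X ∩ (P ∪ EA), Y ∩ (P ∪ EB), hXo.inter (hPo.union hEAo), hYo.inter (hPo.union hEBo),
    inter_subset_left, inter_subset_left, ?_, ?_, ?_⟩
  · apply subset_antisymm
    · intro x ⟨⟨hx, _⟩, hz⟩
      rw [← hXZ]; exact ⟨hx, hz⟩
    · intro x hx
      refine ⟨⟨?_, ?_⟩, hZAZ hx⟩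
      · have : x ∈ X ∩ Z := by rw [hXZ]; exact hx
        exact this.1
      · by_cases hxP : x ∈ P
        · exact Or.inl hxP
        · exact Or.inr (hAE ⟨hx, hxP⟩)
  · apply subset_antisymm
    · intro x ⟨⟨hx, _⟩, hz⟩
      rw [← hYZ]; exact ⟨hx, hz⟩
    · intro x hx
      refine ⟨⟨?_, ?_⟩, hZBZ hx⟩
      · have : x ∈ Y ∩ Z := by rw [hYZ]; exact hx
        exact this.1
      · by_cases hxP : x ∈ P
        · exact Or.inl hxP
        · exact Or.inr (hBE ⟨hx, hxP⟩)
  · rintro x ⟨⟨-, hx1⟩, ⟨-, hx2⟩⟩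
    rcases hx1 with h | h
    · exact h
    rcases hx2 with h' | h'
    · exact h'
    exact absurd (mem_inter h h') (by rw [hEE]; exact notMem_empty x)

/-- Key construction: a family `P K` with the correct traces, contained in `W' K`, such that
`P A ∩ P B ⊆ P (A ∪ B)` whenever `N + 1 - d ≤ (A ∪ B).card`. Downward induction on the
cardinality threshold. -/
lemma my_key {U : Type*} [MetricSpace U] {N : ℕ}
    (Z : Set U) (Zi : Fin N → Set U) (hZi : ∀ i, ∃ O : Set U, IsOpen O ∧ Zi i = O ∩ Z)
    (W' : Finset (Fin N) → Set U) (hW'o : ∀ K, IsOpen (W' K))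
    (hW'Z : ∀ K, W' K ∩ Z = Z ∩ ⋂ i ∈ K, Zi i) (d : ℕ) :
    ∃ P : Finset (Fin N) → Set U, (∀ K, IsOpen (P K)) ∧ (∀ K, P K ⊆ W' K) ∧
      (∀ K, P K ∩ Z = Z ∩ ⋂ i ∈ K, Zi i) ∧
      ∀ A B : Finset (Fin N), N + 1 - d ≤ (A ∪ B).card → P A ∩ P B ⊆ P (A ∪ B) := by
  classical
  have relopen : ∀ K : Finset (Fin N), ∃ O, IsOpen O ∧ (Z ∩ ⋂ i ∈ K, Zi i) = O ∩ Z := by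
    intro K
    choose O hOo hOZ using hZi
    refine ⟨⋂ i ∈ K, O i, isOpen_biInter_finset fun i _ => hOo i, ?_⟩
    ext x
    simp only [mem_inter_iff, mem_iInter]
    constructor
    · rintro ⟨hxZ, h⟩
      refine ⟨fun i hi => ?_, hxZ⟩
      have := h i hi
      rw [hOZ i] at this
      exact this.1
    · rintro ⟨h, hxZ⟩
      exact ⟨hxZ, fun i hi => by rw [hOZ i]; exact ⟨h i hi, hxZ⟩⟩
  induction d with
  | zero =>
    refine ⟨W', hW'o, fun K => subset_rfl, hW'Z, fun A B h => absurd h ?_⟩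
    have h1 : (A ∪ B).card ≤ Finset.univ.card := Finset.card_le_univ _
    have h2 : (Finset.univ : Finset (Fin N)).card = N := by
      rw [Finset.card_univ, Fintype.card_fin]
    omega
  | succ d ih =>
    obtain ⟨P, hPo, hPW, hPZ, hPcond⟩ := ih
    by_cases hd : N + 1 ≤ d
    · exact ⟨P, hPo, hPW, hPZ, fun A B h => hPcond A B (by omega)⟩
    set m := N - d with hm
    have hthr : N + 1 - d = m + 1 := by omega
    have hthr' : N + 1 - (d + 1) = m := by omega
    rw [hthr] at hPcond
    have inner : ∀ s : Finset (Finset (Fin N) × Finset (Fin N)),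
        ∃ P' : Finset (Fin N) → Set U,
          (∀ K, IsOpen (P' K)) ∧ (∀ K, P' K ⊆ P K) ∧
          (∀ K, P' K ∩ Z = Z ∩ ⋂ i ∈ K, Zi i) ∧
          (∀ K, m ≤ K.card → P' K = P K) ∧
          (∀ p ∈ s, (p.1 ∪ p.2).card = m → P' p.1 ∩ P' p.2 ⊆ P' (p.1 ∪ p.2)) := by
      intro s
      induction s using Finset.induction_on with
      | empty => exact ⟨P, hPo, fun K => subset_rfl, hPZ, fun K _ => rfl, by simp⟩
      | @insert q s hq ih2 =>
        obtain ⟨Q, hQo, hQP, hQZ, hQeq, hQs⟩ := ih2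
        obtain ⟨A, B⟩ := q
        by_cases hcard : (A ∪ B).card = m
        swap
        · refine ⟨Q, hQo, hQP, hQZ, hQeq, ?_⟩
          intro p hp hpc
          rcases Finset.mem_insert.1 hp with h | h
          · subst h; exact absurd hpc hcard
          · exact hQs p h hpc
        by_cases hBA : B ⊆ A
        · refine ⟨Q, hQo, hQP, hQZ, hQeq, ?_⟩
          intro p hp hpc
          rcases Finset.mem_insert.1 hp with h | h
          · subst h
            have : A ∪ B = A := Finset.union_eq_left.2 hBA
            rw [this]
            exact inter_subset_left
          · exact hQs p h hpc
        by_cases hAB : A ⊆ B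
        · refine ⟨Q, hQo, hQP, hQZ, hQeq, ?_⟩
          intro p hp hpc
          rcases Finset.mem_insert.1 hp with h | h
          · subst h
            have : A ∪ B = B := Finset.union_eq_right.2 hAB
            rw [this]
            exact inter_subset_right
          · exact hQs p h hpc
        -- main case
        have hABne : A ≠ B := fun h => hAB (h ▸ subset_rfl)
        have hssA : A ⊂ A ∪ B := Finset.ssubset_iff_subset_ne.2
          ⟨Finset.subset_union_left, fun h => hBA (Finset.union_eq_left.1 h.symm)⟩
        have hssB : B ⊂ A ∪ B := Finset.ssubset_iff_subset_ne.2
          ⟨Finset.subset_union_right, fun h => hAB (Finset.union_eq_right.1 h.symm)⟩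
        have hcA : A.card < m := hcard ▸ Finset.card_lt_card hssA
        have hcB : B.card < m := hcard ▸ Finset.card_lt_card hssB
        have hUA : A ∪ B ≠ A := fun h => absurd (h ▸ hssA) (lt_irrefl _)
        have hUB : A ∪ B ≠ B := fun h => absurd (h ▸ hssB) (lt_irrefl _)
        have htrace : (Z ∩ ⋂ i ∈ A, Zi i) ∩ (Z ∩ ⋂ i ∈ B, Zi i) ⊆ Q (A ∪ B) := by
          have heq : (Z ∩ ⋂ i ∈ A, Zi i) ∩ (Z ∩ ⋂ i ∈ B, Zi i)
              = Z ∩ ⋂ i ∈ A ∪ B, Zi i := by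
            ext x
            simp only [mem_inter_iff, mem_iInter, Finset.mem_union]
            constructor
            · rintro ⟨⟨hz, h1⟩, ⟨-, h2⟩⟩
              exact ⟨hz, fun i hi => hi.elim (h1 i) (h2 i)⟩
            · rintro ⟨hz, h⟩
              exact ⟨⟨hz, fun i hi => h i (Or.inl hi)⟩, ⟨hz, fun i hi => h i (Or.inr hi)⟩⟩
          rw [heq, ← hQZ (A ∪ B)]
          exact inter_subset_left
        obtain ⟨X', Y', hX'o, hY'o, hX's, hY's, hX'Z, hY'Z, hXY⟩ :=
          my_two_set (relopen A) (relopen B) (hQo A) (hQo B) (hQo (A ∪ B))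
            (hQZ A) (hQZ B) htrace
        set R : Finset (Fin N) → Set U :=
          fun K => if K = A then X' else if K = B then Y' else Q K with hR
        have hRsub : ∀ K, R K ⊆ Q K := by
          intro K
          by_cases h1 : K = A
          · subst h1; simp only [hR, if_pos rfl]; exact hX's
          by_cases h2 : K = B
          · subst h2; simp only [hR, if_neg h1, if_pos rfl]; exact hY's
          · simp only [hR, if_neg h1, if_neg h2]
            exact subset_rfl
        have hReqc : ∀ K, m ≤ K.card → R K = Q K := by
          intro K hK
          have h1 : K ≠ A := fun h => by subst h; omega
          have h2 : K ≠ B := fun h => by subst h; omega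
          simp only [hR, if_neg h1, if_neg h2]
        refine ⟨R, ?_, fun K => (hRsub K).trans (hQP K), ?_, ?_, ?_⟩
        · intro K
          by_cases h1 : K = A
          · subst h1; simpa only [hR, if_pos rfl] using hX'o
          by_cases h2 : K = B
          · subst h2; simpa only [hR, if_neg h1, if_pos rfl, ite_true] using hY'o
          · simpa only [hR, if_neg h1, if_neg h2] using hQo K
        · intro K
          by_cases h1 : K = A
          · subst h1; simpa only [hR, if_pos rfl] using hX'Z
          by_cases h2 : K = B
          · subst h2; simpa only [hR, if_neg h1, if_pos rfl, ite_true] using hY'Z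
          · simpa only [hR, if_neg h1, if_neg h2] using hQZ K
        · intro K hK
          rw [hReqc K hK]
          exact hQeq K hK
        · intro p hp hpc
          rcases Finset.mem_insert.1 hp with h | h
          · subst h
            have e1 : R A = X' := by simp only [hR, if_pos rfl]
            have e2 : R B = Y' := by simp [hR, Ne.symm hABne]
            have e3 : R (A ∪ B) = Q (A ∪ B) := by simp only [hR, if_neg hUA, if_neg hUB]
            rw [e1, e2, e3]
            exact hXY
          · have e3 : R (p.1 ∪ p.2) = Q (p.1 ∪ p.2) := hReqc _ (le_of_eq hpc.symm)
            rw [e3]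
            exact fun x hx => hQs p h hpc ⟨hRsub _ hx.1, hRsub _ hx.2⟩
    obtain ⟨P', hP'o, hP'P, hP'Z, hP'eq, hP'cond⟩ := inner Finset.univ
    rw [hthr']
    refine ⟨P', hP'o, fun K => (hP'P K).trans (hPW K), hP'Z, ?_⟩
    intro A B h
    rcases eq_or_lt_of_le h with heq | hlt
    · exact hP'cond (A, B) (Finset.mem_univ _) heq.symm
    · intro x hx
      have : x ∈ P (A ∪ B) := hPcond A B hlt ⟨hP'P A hx.1, hP'P B hx.2⟩
      rwa [hP'eq (A ∪ B) (le_of_lt hlt)]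

theorem exists_open_sets_with_intersection_property
    {U : Type*} [MetricSpace U] {N : ℕ}
    (U' : Set U) (hU'open : IsOpen U') (hU'pc : IsCompact (closure U'))
    (Z : Set U) (hZsub : Z ⊆ U') (hZclosed : Z = closure Z ∩ U')
    (Zi : Fin N → Set U) (hZi : ∀ i, ∃ O : Set U, IsOpen O ∧ Zi i = O ∩ Z)
    (W : Finset (Fin N) → Set U) (hWopen : ∀ K, IsOpen (W K))
    (hWsub : ∀ K, W K ⊆ U')
    (hWZ : ∀ K, W K ∩ Z = Z ∩ ⋂ i ∈ K, Zi i) :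
    ∃ V : Finset (Fin N) → Set U,
      (∀ K, IsOpen (V K)) ∧ (∀ K, V K ⊆ W K) ∧
      (∀ K, V K ∩ Z = Z ∩ ⋂ i ∈ K, Zi i) ∧
      (∀ J K, V J ∩ V K = V (J ∪ K)) := by
  classical
  -- antitone refinement of W
  set W' : Finset (Fin N) → Set U := fun K => ⋂ J ∈ K.powerset, W J with hW'
  have hW'o : ∀ K, IsOpen (W' K) := fun K => isOpen_biInter_finset fun J _ => hWopen J
  have hW'W : ∀ K, W' K ⊆ W K := fun K =>
    biInter_subset_of_mem (Finset.mem_powerset.2 subset_rfl)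
  have hW'Z : ∀ K, W' K ∩ Z = Z ∩ ⋂ i ∈ K, Zi i := by
    intro K
    apply subset_antisymm
    · rw [← hWZ K]
      exact inter_subset_inter_left _ (hW'W K)
    · rintro x ⟨hxZ, hxI⟩
      refine ⟨mem_iInter₂.2 fun J hJ => ?_, hxZ⟩
      have hJK : J ⊆ K := Finset.mem_powerset.1 hJ
      have : x ∈ W J ∩ Z := by
        rw [hWZ J]
        exact ⟨hxZ, mem_iInter₂.2 fun i hi => mem_iInter₂.1 hxI i (hJK hi)⟩
      exact this.1
  obtain ⟨P, hPo, hPW, hPZ, hPcond⟩ := my_key Z Zi hZi W' hW'o hW'Z (N + 1)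
  have hPcond' : ∀ A B : Finset (Fin N), P A ∩ P B ⊆ P (A ∪ B) := by
    intro A B
    exact hPcond A B (by omega)
  refine ⟨fun K => ⋂ J ∈ K.powerset, P J, ?_, ?_, ?_, ?_⟩
  · exact fun K => isOpen_biInter_finset fun J _ => hPo J
  · intro K
    exact (biInter_subset_of_mem (Finset.mem_powerset.2 subset_rfl)).trans
      ((hPW K).trans (hW'W K))
  · intro K
    apply subset_antisymm
    · rw [← hPZ K]
      exact inter_subset_inter_left _
        (biInter_subset_of_mem (Finset.mem_powerset.2 subset_rfl))
    · intro x hx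
      refine ⟨mem_iInter₂.2 fun J hJ => ?_, hx.1⟩
      have hJK : J ⊆ K := Finset.mem_powerset.1 hJ
      have : x ∈ P J ∩ Z := by
        rw [hPZ J]
        exact ⟨hx.1, mem_iInter₂.2 fun i hi =>
          mem_iInter₂.1 hx.2 i (hJK hi)⟩
      exact this.1
  · intro J K
    apply subset_antisymm
    · rintro x ⟨hxJ, hxK⟩
      refine mem_iInter₂.2 fun L hL => ?_
      have hLJK : L ⊆ J ∪ K := Finset.mem_powerset.1 hL
      have h1 : x ∈ P (L ∩ J) :=
        mem_iInter₂.1 hxJ (L ∩ J) (Finset.mem_powerset.2 Finset.inter_subset_right)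
      have h2 : x ∈ P (L \ J) := by
        refine mem_iInter₂.1 hxK (L \ J) (Finset.mem_powerset.2 ?_)
        intro i hi
        rcases Finset.mem_union.1 (hLJK (Finset.mem_sdiff.1 hi).1) with h | h
        · exact absurd h (Finset.mem_sdiff.1 hi).2
        · exact h
      have hLeq : (L ∩ J) ∪ (L \ J) = L := by
        ext i
        simp only [Finset.mem_union, Finset.mem_inter, Finset.mem_sdiff]
        tauto
      have := hPcond' (L ∩ J) (L \ J) ⟨h1, h2⟩
      rwa [hLeq] at this
    · intro x hx
      constructor
      · exact mem_iInter₂.2 fun L hL => mem_iInter₂.1 hx L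
          (Finset.mem_powerset.2 ((Finset.mem_powerset.1 hL).trans Finset.subset_union_left))
      · exact mem_iInter₂.2 fun L hL => mem_iInter₂.1 hx L
          (Finset.mem_powerset.2 ((Finset.mem_powerset.1 hL).trans Finset.subset_union_right))
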